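/- Assume that 1 − T : M → M is invertible. Then γ is bi-additive: γ(x + x', y) = γ(x, y) · γ(x', y) and γ(x, y + y') = γ(x, y) · γ(x, y') in Adj(A(M,T)) for all x, x', y, y' ∈ M. -/

import Mathlib

/-!
Common setup: the adjoint group of the Alexander quandle `A(M,T)` (F.J.-B.J. Clauwens,
"The adjoint group of an Alexander quandle").

For an abelian group `M` with automorphism `T`, the Alexander quandle `A(M,T)` is `M` with
`y * x = T y + x - T x`, and the adjoint group `Adj(A(M,T))` is presented with generators
`e x` for `x : M` and relations `e (y * x) = (e x)⁻¹ * e y * e x`.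
-/

open scoped TensorProduct

namespace Clauwens

variable {M : Type*} [AddCommGroup M]

/-- The relations of the adjoint group of the Alexander quandle `A(M,T)`:
for each `x y : M`, the relation `e_{y*x} = e_x⁻¹ * e_y * e_x`, where `y*x = T y + x - T x`. -/
def rels (T : M ≃+ M) : Set (FreeGroup M) :=
  {r | ∃ x y : M, r = FreeGroup.of (T y + x - T x) *
      ((FreeGroup.of x)⁻¹ * FreeGroup.of y * FreeGroup.of x)⁻¹}

/-- The adjoint group `Adj(A(M,T))` of the Alexander quandle. -/
abbrev Adj (T : M ≃+ M) : Type _ := PresentedGroup (rels T)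

/-- The generator `e_x` of the adjoint group. -/
def e (T : M ≃+ M) (x : M) : Adj T := PresentedGroup.of x

/-- The quandle automorphism `p ↦ p * x = T p + x - T x` of `A(M,T)`. -/
def σ (T : M ≃+ M) (x : M) : Equiv.Perm M where
  toFun p := T p + (x - T x)
  invFun p := T.symm (p - (x - T x))
  left_inv p := by simp
  right_inv p := by simp

lemma σ_apply (T : M ≃+ M) (x p : M) : σ T x p = T p + (x - T x) := rfl

lemma σ_inv_apply (T : M ≃+ M) (x p : M) : (σ T x)⁻¹ p = T.symm (p - (x - T x)) := rfl

lemma σ_rel (T : M ≃+ M) (x y : M) :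
    σ T x * σ T y * (σ T x)⁻¹ = σ T (T y + x - T x) := by
  ext p
  simp only [Equiv.Perm.mul_apply, σ_apply, σ_inv_apply, map_add, map_sub,
    AddEquiv.apply_symm_apply]
  abel

/-- The homomorphism `ρ` from the adjoint group to the group of quandle automorphisms of
`A(M,T)` acting on the right of `M` (hence the `ᵐᵒᵖ`), induced by the right action
`p · e_x = p * x = T p + x - T x`; the automorphism by which `g` acts is `(ρ T g).unop`. -/
def ρ (T : M ≃+ M) : Adj T →* (Equiv.Perm M)ᵐᵒᵖ :=
  PresentedGroup.toGroup (f := fun x => MulOpposite.op (σ T x)) (by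
    rintro r ⟨x, y, rfl⟩
    simp only [map_mul, map_inv, FreeGroup.lift_apply_of, ← MulOpposite.op_inv, ← MulOpposite.op_mul,
      mul_inv_rev, inv_inv]
    rw [MulOpposite.op_eq_one_iff, ← σ_rel T x y]
    group)

/-- `γ(x,y) = e_0⁻¹ e_{x+y} e_y⁻¹ e_0 e_x⁻¹ e_0`, so that
`e_0⁻¹ e_{x+y} = γ(x,y) e_0⁻¹ e_x e_0⁻¹ e_y`. -/
def γ (T : M ≃+ M) (x y : M) : Adj T :=
  (e T 0)⁻¹ * e T (x + y) * (e T y)⁻¹ * e T 0 * (e T x)⁻¹ * e T 0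

/-- `λ(x,y) = γ(y,x)⁻¹ γ(x,y)`. -/
def lam (T : M ≃+ M) (x y : M) : Adj T := (γ T y x)⁻¹ * γ T x y

/-- The additive endomorphism `τ` of `M ⊗_ℤ M` with `τ(x ⊗ y) = T y ⊗ x`. -/
noncomputable def τmap (T : M ≃+ M) : M ⊗[ℤ] M →ₗ[ℤ] M ⊗[ℤ] M :=
  (TensorProduct.comm ℤ M M).toLinearMap ∘ₗ
    (LinearMap.lTensor M T.toAddMonoidHom.toIntLinearMap)

lemma τmap_tmul (T : M ≃+ M) (x y : M) : τmap T (x ⊗ₜ[ℤ] y) = T y ⊗ₜ[ℤ] x := rfl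

/-- `S(M,T) = coker(1 - τ) = (M ⊗_ℤ M)/im(1 - τ)`. -/
abbrev S (T : M ≃+ M) : Type _ :=
  (M ⊗[ℤ] M) ⧸ LinearMap.range (LinearMap.id - τmap T)

/-- The class `[x ⊗ y]` in `S(M,T)`. -/
noncomputable def cls (T : M ≃+ M) (x y : M) : S T := Submodule.Quotient.mk (x ⊗ₜ[ℤ] y)

lemma mk_τmap (T : M ≃+ M) (w : M ⊗[ℤ] M) :
    (Submodule.Quotient.mk (τmap T w) : S T) = Submodule.Quotient.mk w := by
  rw [Submodule.Quotient.eq]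
  exact ⟨-w, by simp [LinearMap.sub_apply]; abel⟩

lemma cls_T (T : M ≃+ M) (x y : M) : cls T (T x) (T y) = cls T x y := by
  have h1 : cls T (T x) (T y) = Submodule.Quotient.mk (τmap T (T y ⊗ₜ[ℤ] x)) := rfl
  have h2 : (Submodule.Quotient.mk (T y ⊗ₜ[ℤ] x) : S T)
      = Submodule.Quotient.mk (τmap T (x ⊗ₜ[ℤ] y)) := rfl
  rw [h1, mk_τmap, h2, mk_τmap]; rfl

lemma cls_add_left (T : M ≃+ M) (x x' y : M) :
    cls T (x + x') y = cls T x y + cls T x' y := by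
  simp only [cls, ← Submodule.Quotient.mk_add, TensorProduct.add_tmul]

lemma cls_add_right (T : M ≃+ M) (x y y' : M) :
    cls T x (y + y') = cls T x y + cls T x y' := by
  simp only [cls, ← Submodule.Quotient.mk_add, TensorProduct.tmul_add]

lemma cls_neg_left (T : M ≃+ M) (x y : M) : cls T (-x) y = -cls T x y := by
  simp only [cls, ← Submodule.Quotient.mk_neg, TensorProduct.neg_tmul]

lemma cls_zero_left (T : M ≃+ M) (y : M) : cls T 0 y = 0 := by
  simp [cls, TensorProduct.zero_tmul]

lemma cls_zero_right (T : M ≃+ M) (x : M) : cls T x 0 = 0 := by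
  simp [cls, TensorProduct.tmul_zero]

/-- `T^m` for `m : ℤ`. -/
def Tz (T : M ≃+ M) (m : ℤ) : M ≃+ M := (m • T : AddAut M)

lemma Tz_zero (T : M ≃+ M) (x : M) : Tz T 0 x = x := rfl

lemma Tz_one (T : M ≃+ M) (x : M) : Tz T 1 x = T x := by simp [Tz]

lemma Tz_add (T : M ≃+ M) (m n : ℤ) (x : M) : Tz T (m + n) x = Tz T m (Tz T n x) := by
  simp [Tz, add_zsmul, AddAut.add_apply]

lemma cls_Tz_shift (T : M ≃+ M) (m : ℤ) (x y : M) :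
    cls T (Tz T (m + 1) x) (Tz T (m + 1) y) = cls T (Tz T m x) (Tz T m y) := by
  have h : ∀ z : M, Tz T (m + 1) z = T (Tz T m z) := by
    intro z; rw [add_comm, Tz_add, Tz_one]
  rw [h, h, cls_T]

lemma cls_Tz (T : M ≃+ M) (m : ℤ) (x y : M) :
    cls T (Tz T m x) (Tz T m y) = cls T x y := by
  induction m using Int.induction_on with
  | zero => rfl
  | succ i ih => rw [cls_Tz_shift, ih]
  | pred i ih =>
      have h := cls_Tz_shift T (-(i : ℤ) - 1) x y
      rw [sub_add_cancel] at h
      rw [← h, ih]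

/-- `F(M,T)` is the set `ℤ × M × S(M,T)` equipped with the multiplication
`(k, x, α)(m, y, β) = (k + m, T^m x + y, α + β + [T^m x ⊗ y])`. -/
abbrev F (T : M ≃+ M) : Type _ := ℤ × M × S T

noncomputable instance (T : M ≃+ M) : Group (F T) where
  mul g h := (g.1 + h.1, Tz T h.1 g.2.1 + h.2.1, g.2.2 + h.2.2 + cls T (Tz T h.1 g.2.1) h.2.1)
  one := ((0 : ℤ), (0 : M), (0 : S T))
  inv g := (-g.1, -(Tz T (-g.1) g.2.1), -g.2.2 + cls T g.2.1 g.2.1)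
  mul_assoc g h k := by
    obtain ⟨a, x, α⟩ := g; obtain ⟨b, y, β⟩ := h; obtain ⟨c, z, δ⟩ := k
    refine Prod.ext (add_assoc a b c) (Prod.ext ?_ ?_)
    · show Tz T c (Tz T b x + y) + z = Tz T (b + c) x + (Tz T c y + z)
      rw [add_comm b c, Tz_add, map_add]
      abel
    · show α + β + cls T (Tz T b x) y + δ + cls T (Tz T c (Tz T b x + y)) z
        = α + (β + δ + cls T (Tz T c y) z) + cls T (Tz T (b + c) x) (Tz T c y + z)
      rw [add_comm b c, Tz_add, map_add, cls_add_left, cls_add_right]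
      have h1 : cls T (Tz T c (Tz T b x)) (Tz T c y) = cls T (Tz T b x) y := cls_Tz T c _ _
      rw [h1]
      abel
  one_mul g := by
    obtain ⟨a, x, α⟩ := g
    refine Prod.ext (zero_add a) (Prod.ext ?_ ?_)
    · show Tz T a 0 + x = x
      rw [map_zero, zero_add]
    · show 0 + α + cls T (Tz T a 0) x = α
      rw [map_zero, cls_zero_left, zero_add, add_zero]
  mul_one g := by
    obtain ⟨a, x, α⟩ := g
    refine Prod.ext (add_zero a) (Prod.ext ?_ ?_)
    · show Tz T 0 x + 0 = x
      rw [Tz_zero, add_zero]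
    · show α + 0 + cls T (Tz T 0 x) 0 = α
      rw [cls_zero_right, add_zero, add_zero]
  inv_mul_cancel g := by
    obtain ⟨a, x, α⟩ := g
    have hx : Tz T a (Tz T (-a) x) = x := by
      rw [← Tz_add, add_neg_cancel, Tz_zero]
    refine Prod.ext (neg_add_cancel a) (Prod.ext ?_ ?_)
    · show Tz T a (-(Tz T (-a) x)) + x = 0
      rw [map_neg, hx, neg_add_cancel]
    · show -α + cls T x x + α + cls T (Tz T a (-(Tz T (-a) x))) x = 0
      rw [map_neg, hx, cls_neg_left]
      abel

/-- The canonical augmentation `ε : Adj(A(M,T)) → ℤ`, with `ε(e_x) = 1` for all `x`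
(written multiplicatively since `Adj` is a multiplicative group). -/
def ε (T : M ≃+ M) : Adj T →* Multiplicative ℤ :=
  PresentedGroup.toGroup (f := fun _ => Multiplicative.ofAdd (1 : ℤ)) (by
    rintro r ⟨x, y, rfl⟩
    simp only [map_mul, map_inv, FreeGroup.lift_apply_of]
    group)

/-- The subgroup `F(M,T)⁰` of elements `(0, x, α)` of `F(M,T)`. -/
noncomputable def Fo (T : M ≃+ M) : Subgroup (F T) where
  carrier := {g | g.1 = 0}
  mul_mem' := by
    rintro ⟨a, x, α⟩ ⟨b, y, β⟩ (ha : a = 0) (hb : b = 0)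
    show a + b = 0
    rw [ha, hb, add_zero]
  one_mem' := rfl
  inv_mem' := by
    rintro ⟨a, x, α⟩ (ha : a = 0)
    show -a = 0
    rw [ha, neg_zero]

/-- The fundamental group `π₁(A(M,T), 0)` of the Alexander quandle based at `0 ∈ M`:
the elements of `ker ε` fixing the base point `0`. -/
def pi1 (T : M ≃+ M) : Subgroup (Adj T) where
  carrier := {g | g ∈ (ε T).ker ∧ (ρ T g).unop 0 = 0}
  one_mem' := ⟨(ε T).ker.one_mem, by simp⟩
  mul_mem' := by
    intro a b ha hb
    refine ⟨(ε T).ker.mul_mem ha.1 hb.1, ?_⟩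
    show ((ρ T) (a * b)).unop 0 = 0
    rw [map_mul, MulOpposite.unop_mul, Equiv.Perm.mul_apply, ha.2, hb.2]
  inv_mem' := by
    intro a ha
    refine ⟨(ε T).ker.inv_mem ha.1, ?_⟩
    show ((ρ T) a⁻¹).unop 0 = 0
    rw [map_inv, MulOpposite.unop_inv]
    exact Equiv.Perm.inv_eq_iff_eq.mpr ha.2.symm


lemma rel_e (T : M ≃+ M) (x y : M) :
    e T (T y + x - T x) = (e T x)⁻¹ * e T y * e T x := by
  have h : (PresentedGroup.mk (rels T)) (FreeGroup.of (T y + x - T x) *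
      ((FreeGroup.of x)⁻¹ * FreeGroup.of y * FreeGroup.of x)⁻¹) = 1 := by
    apply (QuotientGroup.eq_one_iff _).mpr
    exact Subgroup.subset_normalClosure ⟨x, y, rfl⟩
  simp only [map_mul, map_inv] at h
  rw [mul_inv_eq_one] at h
  exact h

/-- `a x = e_0⁻¹ e_x`. -/
def aa (T : M ≃+ M) (x : M) : Adj T := (e T 0)⁻¹ * e T x

lemma conj_e0 (T : M ≃+ M) (y : M) : (e T 0)⁻¹ * e T y * e T 0 = e T (T y) := by
  have := rel_e T 0 y
  simpa using this.symm

lemma conj_e0' (T : M ≃+ M) (y : M) : e T 0 * e T y * (e T 0)⁻¹ = e T (T.symm y) := by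
  have := conj_e0 T (T.symm y)
  rw [T.apply_symm_apply] at this
  rw [← this]
  group

lemma conj_aa_e (T : M ≃+ M) (x y : M) :
    (aa T x)⁻¹ * e T y * aa T x = e T (y + (x - T x)) := by
  have h1 : (aa T x)⁻¹ * e T y * aa T x
      = (e T x)⁻¹ * (e T 0 * e T y * (e T 0)⁻¹) * e T x := by
    unfold aa; group
  rw [conj_e0'] at h1
  have h2 := rel_e T x (T.symm y)
  rw [T.apply_symm_apply] at h2
  rw [h1, ← h2]
  congr 1
  abel

lemma conj_aa_aa (T : M ≃+ M) (x z : M) :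
    (aa T x)⁻¹ * aa T z * aa T x = (e T (x - T x))⁻¹ * e T (z + (x - T x)) := by
  have h0 : (aa T x)⁻¹ * aa T z * aa T x
      = ((aa T x)⁻¹ * e T 0 * aa T x)⁻¹ * ((aa T x)⁻¹ * e T z * aa T x) := by
    unfold aa; group
  rw [h0, conj_aa_e, conj_aa_e, zero_add]

lemma gamma_inv_eq (T : M ≃+ M) (x y : M) :
    (γ T x y)⁻¹ = aa T x * aa T y * (aa T (x + y))⁻¹ := by
  unfold γ aa; group

lemma aa_add (T : M ≃+ M) (x y : M) :
    aa T (x + y) = γ T x y * aa T x * aa T y := by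
  unfold γ aa; group

lemma e_comm_gamma (T : M ≃+ M) (x y w : M) :
    e T w * γ T x y = γ T x y * e T w := by
  have h1 : (aa T y)⁻¹ * ((aa T x)⁻¹ * e T w * aa T x) * aa T y
      = (aa T (x + y))⁻¹ * e T w * aa T (x + y) := by
    rw [conj_aa_e T x w, conj_aa_e T y (w + (x - T x)), conj_aa_e T (x + y) w]
    congr 1
    rw [map_add]
    abel
  have h3 : e T w * (γ T x y)⁻¹ = (γ T x y)⁻¹ * e T w := by
    rw [gamma_inv_eq]
    calc e T w * (aa T x * aa T y * (aa T (x + y))⁻¹)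
        = aa T x * aa T y * ((aa T y)⁻¹ * ((aa T x)⁻¹ * e T w * aa T x) * aa T y) *
            (aa T (x + y))⁻¹ := by group
      _ = aa T x * aa T y * ((aa T (x + y))⁻¹ * e T w * aa T (x + y)) *
            (aa T (x + y))⁻¹ := by rw [h1]
      _ = aa T x * aa T y * (aa T (x + y))⁻¹ * e T w := by group
  calc e T w * γ T x y
      = γ T x y * ((γ T x y)⁻¹ * e T w) * γ T x y := by group
    _ = γ T x y * (e T w * (γ T x y)⁻¹) * γ T x y := by rw [← h3]
    _ = γ T x y * e T w := by group

lemma gamma_comm (T : M ≃+ M) (x y : M) (g : Adj T) :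
    g * γ T x y = γ T x y * g := by
  have hg : g ∈ Subgroup.centralizer {γ T x y} := by
    apply PresentedGroup.generated_by
    intro j
    rw [Subgroup.mem_centralizer_iff]
    intro h hh
    rw [Set.mem_singleton_iff] at hh
    subst hh
    exact (e_comm_gamma T x y j).symm
  exact (Subgroup.mem_centralizer_iff.mp hg (γ T x y) rfl).symm

lemma key_conj (T : M ≃+ M) {w u : M} (hw : w - T w = u) (z : M) :
    (aa T w)⁻¹ * aa T z * aa T w = (aa T u)⁻¹ * aa T (z + u) := by
  rw [conj_aa_aa, hw]
  unfold aa; group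

lemma gamma_add_left (T : M ≃+ M) (hs : Function.Surjective fun x : M => x - T x)
    (x y u : M) : γ T (x + y) u = γ T x u * γ T y u := by
  obtain ⟨w, hw0⟩ := hs u
  have hw : w - T w = u := hw0
  have K := key_conj T hw
  have h1 : (aa T w)⁻¹ * aa T (x + y) * aa T w
      = γ T (x + y) u * γ T x y * ((aa T u)⁻¹ * (aa T x * aa T y * aa T u)) := by
    rw [K (x + y), aa_add T (x + y) u, aa_add T x y]
    calc (aa T u)⁻¹ * (γ T (x + y) u * (γ T x y * aa T x * aa T y) * aa T u)
        = ((aa T u)⁻¹ * γ T (x + y) u) * (γ T x y * (aa T x * aa T y * aa T u)) := by group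
      _ = (γ T (x + y) u * (aa T u)⁻¹) * (γ T x y * (aa T x * aa T y * aa T u)) := by
            rw [gamma_comm T (x + y) u ((aa T u)⁻¹)]
      _ = γ T (x + y) u * (((aa T u)⁻¹ * γ T x y) * (aa T x * aa T y * aa T u)) := by group
      _ = γ T (x + y) u * ((γ T x y * (aa T u)⁻¹) * (aa T x * aa T y * aa T u)) := by
            rw [gamma_comm T x y ((aa T u)⁻¹)]
      _ = γ T (x + y) u * γ T x y * ((aa T u)⁻¹ * (aa T x * aa T y * aa T u)) := by group
  have e1 : ∀ z : M, (aa T u)⁻¹ * aa T (z + u)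
      = γ T z u * ((aa T u)⁻¹ * aa T z * aa T u) := by
    intro z
    rw [aa_add T z u]
    calc (aa T u)⁻¹ * (γ T z u * aa T z * aa T u)
        = ((aa T u)⁻¹ * γ T z u) * (aa T z * aa T u) := by group
      _ = (γ T z u * (aa T u)⁻¹) * (aa T z * aa T u) := by rw [gamma_comm T z u ((aa T u)⁻¹)]
      _ = γ T z u * ((aa T u)⁻¹ * aa T z * aa T u) := by group
  have h2 : (aa T w)⁻¹ * aa T (x + y) * aa T w
      = γ T x y * (γ T x u * γ T y u) * ((aa T u)⁻¹ * (aa T x * aa T y * aa T u)) := by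
    calc (aa T w)⁻¹ * aa T (x + y) * aa T w
        = (aa T w)⁻¹ * (γ T x y * aa T x * aa T y) * aa T w := by rw [aa_add T x y]
      _ = ((aa T w)⁻¹ * γ T x y) * (aa T x * aa T y * aa T w) := by group
      _ = (γ T x y * (aa T w)⁻¹) * (aa T x * aa T y * aa T w) := by
            rw [gamma_comm T x y ((aa T w)⁻¹)]
      _ = γ T x y * (((aa T w)⁻¹ * aa T x * aa T w) * ((aa T w)⁻¹ * aa T y * aa T w)) := by
            group
      _ = γ T x y * (((aa T u)⁻¹ * aa T (x + u)) * ((aa T u)⁻¹ * aa T (y + u))) := by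
            rw [K x, K y]
      _ = γ T x y * ((γ T x u * ((aa T u)⁻¹ * aa T x * aa T u)) *
            (γ T y u * ((aa T u)⁻¹ * aa T y * aa T u))) := by rw [e1 x, e1 y]
      _ = γ T x y * (γ T x u * ((((aa T u)⁻¹ * aa T x * aa T u) * γ T y u) *
            ((aa T u)⁻¹ * aa T y * aa T u))) := by group
      _ = γ T x y * (γ T x u * ((γ T y u * ((aa T u)⁻¹ * aa T x * aa T u)) *
            ((aa T u)⁻¹ * aa T y * aa T u))) := by
            rw [gamma_comm T y u ((aa T u)⁻¹ * aa T x * aa T u)]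
      _ = γ T x y * (γ T x u * γ T y u) * ((aa T u)⁻¹ * (aa T x * aa T y * aa T u)) := by
            group
  have h3 : γ T (x + y) u * γ T x y = γ T x y * (γ T x u * γ T y u) :=
    mul_right_cancel (h1.symm.trans h2)
  rw [gamma_comm T x y (γ T (x + y) u)] at h3
  exact mul_left_cancel h3

lemma gamma_cocycle (T : M ≃+ M) (x y z : M) :
    γ T x (y + z) * γ T y z = γ T (x + y) z * γ T x y := by
  have h1 : aa T (x + (y + z))
      = γ T x (y + z) * γ T y z * (aa T x * aa T y * aa T z) := by
    rw [aa_add T x (y + z), aa_add T y z]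
    calc γ T x (y + z) * aa T x * (γ T y z * aa T y * aa T z)
        = γ T x (y + z) * ((aa T x * γ T y z) * (aa T y * aa T z)) := by group
      _ = γ T x (y + z) * ((γ T y z * aa T x) * (aa T y * aa T z)) := by
            rw [gamma_comm T y z (aa T x)]
      _ = γ T x (y + z) * γ T y z * (aa T x * aa T y * aa T z) := by group
  have h2 : aa T (x + y + z)
      = γ T (x + y) z * γ T x y * (aa T x * aa T y * aa T z) := by
    rw [aa_add T (x + y) z, aa_add T x y]
    group
  rw [← add_assoc] at h1
  exact mul_right_cancel (h1.symm.trans h2)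

/-- If `1 - T` is invertible then `γ` is bi-additive. -/
theorem statement8 (T : M ≃+ M) (hT : Function.Bijective fun x : M => x - T x) :
    (∀ x x' y : M, γ T (x + x') y = γ T x y * γ T x' y) ∧
    (∀ x y y' : M, γ T x (y + y') = γ T x y * γ T x y') := by
  refine ⟨fun x x' y => gamma_add_left T hT.2 x x' y, fun x y y' => ?_⟩
  have co := gamma_cocycle T x y y'
  rw [gamma_add_left T hT.2 x y y'] at co
  have h : γ T x y' * γ T y y' * γ T x y = (γ T x y * γ T x y') * γ T y y' := by
    calc γ T x y' * γ T y y' * γ T x y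
        = γ T x y' * (γ T y y' * γ T x y) := by group
      _ = γ T x y' * (γ T x y * γ T y y') := by rw [gamma_comm T x y (γ T y y')]
      _ = (γ T x y' * γ T x y) * γ T y y' := by group
      _ = (γ T x y * γ T x y') * γ T y y' := by
            rw [← gamma_comm T x y' (γ T x y)]
  rw [h] at co
  exact mul_right_cancel co


end Clauwens
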